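/- If k ∈ End(V) is orthogonal (k* k = Id_V) and satisfies k(V_{≥λ}) ⊆ V_{≥λ} for every λ ∈ ℝ, then k commutes with Β: kΒ = Βk. (This expresses the identity O(V) ∩ Q_Β = K_Β for the parabolic subgroup Q_Β associated with Β, where K_Β is the group of orthogonal maps commuting with Β.) -/

import Mathlib

/-- For a self-adjoint `Β ∈ End(V)` and `λ ∈ ℝ`, the subspace `V_{≥λ}`: the sum of the
eigenspaces of `Β` with eigenvalue `≥ λ`. -/
noncomputable def sumEigenspacesGE {V : Type*} [NormedAddCommGroup V]
    [InnerProductSpace ℝ V] (B : V →ₗ[ℝ] V) (lam : ℝ) : Submodule ℝ V :=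
  ⨆ (mu : ℝ) (_ : lam ≤ mu), Module.End.eigenspace B mu

/-- If `k ∈ End(V)` is orthogonal (`k* k = Id`) and satisfies `k(V_{≥λ}) ⊆ V_{≥λ}` for every
`λ ∈ ℝ`, then `k` commutes with the self-adjoint endomorphism `Β`. (This expresses the
identity `O(V) ∩ Q_Β = K_Β` for the parabolic subgroup `Q_Β` associated with `Β`.) -/
theorem orthogonal_inter_parabolic_commutes
    (V : Type*) [NormedAddCommGroup V] [InnerProductSpace ℝ V] [FiniteDimensional ℝ V]
    (B : V →ₗ[ℝ] V) (hB : LinearMap.adjoint B = B)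
    (k : V →ₗ[ℝ] V) (hk : LinearMap.adjoint k ∘ₗ k = LinearMap.id)
    (hpres : ∀ (lam : ℝ) (x : V), x ∈ sumEigenspacesGE B lam →
      k x ∈ sumEigenspacesGE B lam) :
    k ∘ₗ B = B ∘ₗ k := by
  have hBsym : B.IsSymmetric := by
    rw [LinearMap.isSymmetric_iff_isSelfAdjoint, LinearMap.isSelfAdjoint_iff']; exact hB
  -- k preserves inner products
  have hinner : ∀ x y : V, (inner ℝ (k x) (k y) : ℝ) = inner ℝ x y := by
    intro x y
    have := congrArg (fun f : V →ₗ[ℝ] V => f x) hk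
    simp only [LinearMap.comp_apply, LinearMap.id_apply] at this
    calc (inner ℝ (k x) (k y) : ℝ) = inner ℝ (LinearMap.adjoint k (k x)) y := by
          rw [LinearMap.adjoint_inner_left]
      _ = inner ℝ x y := by rw [this]
  have hkinj : Function.Injective k := by
    intro x y hxy
    have hx := congrArg (fun f : V →ₗ[ℝ] V => f x) hk
    have hy := congrArg (fun f : V →ₗ[ℝ] V => f y) hk
    simp only [LinearMap.comp_apply, LinearMap.id_apply] at hx hy
    rw [← hx, ← hy, hxy]
  -- any k-invariant subspace is mapped onto itself, and its orthogonal is preserved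
  have hmap : ∀ W : Submodule ℝ V, (∀ x ∈ W, k x ∈ W) → Submodule.map k W = W := by
    intro W hW
    have hle : Submodule.map k W ≤ W := by
      rintro _ ⟨x, hx, rfl⟩; exact hW x hx
    refine Submodule.eq_of_le_of_finrank_le hle ?_
    have : Module.finrank ℝ (Submodule.map k W) = Module.finrank ℝ W :=
      (LinearEquiv.finrank_eq (Submodule.equivMapOfInjective k hkinj W)).symm
    omega
  have horth : ∀ W : Submodule ℝ V, (∀ x ∈ W, k x ∈ W) → ∀ x ∈ Wᗮ, k x ∈ Wᗮ := by
    intro W hW x hx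
    intro w hw
    obtain ⟨w', hw', rfl⟩ : w ∈ Submodule.map k W := by rw [hmap W hW]; exact hw
    rw [hinner]
    exact hx w' hw'
  -- notation
  set E : ℝ → Submodule ℝ V := fun mu => Module.End.eigenspace B mu with hE
  have hEorth : ∀ {mu nu : ℝ}, mu ≠ nu → ∀ a ∈ E mu, ∀ b ∈ E nu, (inner ℝ a b : ℝ) = 0 := by
    intro mu nu hne a ha b hb
    exact hBsym.orthogonalFamily_eigenspaces hne ⟨a, ha⟩ ⟨b, hb⟩
  -- W_{>μ}
  set Wgt : ℝ → Submodule ℝ V := fun mu => ⨆ (nu : ℝ) (_ : mu < nu), E nu with hWgt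
  have hGEle : ∀ {mu nu : ℝ}, mu < nu → sumEigenspacesGE B nu ≤ Wgt mu := by
    intro mu nu h
    refine iSup₂_le fun rho hrho => ?_
    exact le_iSup₂_of_le rho (lt_of_lt_of_le h hrho) le_rfl
  have hWgt_inv : ∀ mu : ℝ, ∀ x ∈ Wgt mu, k x ∈ Wgt mu := by
    intro mu x hx
    have : Wgt mu ≤ Submodule.comap k (Wgt mu) := by
      refine iSup₂_le fun nu hnu => fun y hy => ?_
      have hy' : y ∈ sumEigenspacesGE B nu :=
        Submodule.mem_iSup_of_mem nu (Submodule.mem_iSup_of_mem le_rfl hy)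
      exact hGEle hnu (hpres nu y hy')
    exact this hx
  -- E μ ⊥ Wgt μ
  have hEperp : ∀ mu : ℝ, E mu ≤ (Wgt mu)ᗮ := by
    intro mu a ha
    have : Wgt mu ≤ (E mu)ᗮ := by
      refine iSup₂_le fun nu hnu => fun b hb => ?_
      intro c hc
      exact hEorth (ne_of_lt hnu) c hc b hb
    intro b hb
    exact (Submodule.mem_orthogonal' _ _).1 (this hb) a ha
  -- V_{≥μ} ≤ E μ ⊔ Wgt μ
  have hsplit : ∀ mu : ℝ, sumEigenspacesGE B mu ≤ E mu ⊔ Wgt mu := by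
    intro mu
    refine iSup₂_le fun nu hnu => ?_
    rcases eq_or_lt_of_le hnu with h | h
    · exact le_sup_of_le_left (by rw [h])
    · exact le_sup_of_le_right (le_iSup₂_of_le nu h le_rfl)
  -- k preserves each eigenspace
  have hkE : ∀ mu : ℝ, ∀ x ∈ E mu, k x ∈ E mu := by
    intro mu x hx
    have h1 : k x ∈ sumEigenspacesGE B mu :=
      hpres mu x (Submodule.mem_iSup_of_mem mu (Submodule.mem_iSup_of_mem le_rfl hx))
    have h2 : k x ∈ (Wgt mu)ᗮ := horth _ (hWgt_inv mu) x (hEperp mu hx)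
    obtain ⟨a, ha, b, hb, hab⟩ := Submodule.mem_sup.1 (hsplit mu h1)
    have hborth : b ∈ (Wgt mu)ᗮ := by
      have : b = k x - a := by rw [← hab]; abel
      rw [this]
      exact Submodule.sub_mem _ h2 (hEperp mu ha)
    have hb0 : b = 0 := by
      have := hborth b hb
      exact inner_self_eq_zero.1 (by rw [real_inner_comm] at this; exact this)
    rw [← hab, hb0, add_zero]
    exact ha
  -- conclude on ⊤ = ⨆ eigenspaces
  have htop : (⨆ mu : ℝ, E mu) = ⊤ := by
    have := hBsym.orthogonalComplement_iSup_eigenspaces_eq_bot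
    rwa [Submodule.orthogonal_eq_bot_iff] at this
  ext x
  have hx : x ∈ ⨆ mu : ℝ, E mu := htop ▸ Submodule.mem_top
  simp only [LinearMap.comp_apply]
  refine Submodule.iSup_induction E (motive := fun x => k (B x) = B (k x)) hx ?_ ?_ ?_
  · intro mu y hy
    have hym : B y = mu • y := Module.End.mem_eigenspace_iff.1 hy
    have hky : B (k y) = mu • k y := Module.End.mem_eigenspace_iff.1 (hkE mu y hy)
    rw [hym, map_smul, hky]
  · simp
  · intro y z hy hz
    simp [hy, hz]
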